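/- Let n ≥ 2, k ≥ 1, m ≥ 0, let S_1, …, S_n ⊆ S be action sets, and set β := min(m/k, 1). Let (x_i^ng)_{i=1}^n be any nominal greedy profile and (x_i^ag, z_i^ag)_{i=1}^n be any augmented greedy profile for (f, (S_i), k, m). Then f(x_1^ag ∪ … ∪ x_n^ag) ≥ f(x_1^ng ∪ … ∪ x_n^ng) / (2 − β^{n−1}/(∑_{i=0}^{n−1} β^i)). -/

import Mathlib

open Finset

variable {α : Type*}

/-- `f` is monotone on finsets. -/
def IsMonotoneFn (f : Finset α → ℝ) : Prop := ∀ A B : Finset α, A ⊆ B → f A ≤ f B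

/-- `f` is submodular. -/
def IsSubmodularFn [DecidableEq α] (f : Finset α → ℝ) : Prop :=
  ∀ A B : Finset α, A ⊆ B → ∀ s ∉ B, f (insert s A) - f A ≥ f (insert s B) - f B

/-- Marginal contribution Δ(A|B) = f(A ∪ B) − f(B). -/
def marg [DecidableEq α] (f : Finset α → ℝ) (A B : Finset α) : ℝ := f (A ∪ B) - f B

/-- Δ^l(A|B): best marginal of a subset of `A` of size at most `l`. -/
noncomputable def margSup [DecidableEq α] (f : Finset α → ℝ) (l : ℕ) (A B : Finset α) : ℝ :=
  (A.powerset.filter (fun C => C.card ≤ l)).sup' ⟨∅, by simp⟩ (fun C => marg f C B)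

/-- Union of the first `i` sets: x_0 ∪ ⋯ ∪ x_{i-1}. -/
def pref [DecidableEq α] (x : ℕ → Finset α) (i : ℕ) : Finset α := (Finset.range i).biUnion x

/-- A nominal greedy profile. -/
def NomGreedy [DecidableEq α] (f : Finset α → ℝ) (Ss : ℕ → Finset α) (k n : ℕ)
    (x : ℕ → Finset α) : Prop :=
  ∀ i < n, x i ⊆ Ss i ∧ (x i).card ≤ k ∧
    ∀ c : Finset α, c ⊆ Ss i → c.card ≤ k → f (c ∪ pref x i) ≤ f (x i ∪ pref x i)

/-- An augmented greedy profile. -/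
def AugGreedy [DecidableEq α] (f : Finset α → ℝ) (Ss : ℕ → Finset α) (k m n : ℕ)
    (x z : ℕ → Finset α) : Prop :=
  ∀ i < n,
    (x i ⊆ Ss i ∪ pref z i ∧ (x i).card ≤ k ∧
      ∀ c : Finset α, c ⊆ Ss i ∪ pref z i → c.card ≤ k →
        f (c ∪ pref x i) ≤ f (x i ∪ pref x i)) ∧
    ∃ zk zr : Finset α,
      z i = zk ∪ zr ∧ zk ⊆ Ss i ∧ zk.card ≤ min k m ∧
      (∀ w : Finset α, w ⊆ Ss i → w.card ≤ min k m →
        marg f w (pref x (i + 1)) ≤ marg f zk (pref x (i + 1))) ∧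
      zr ⊆ Ss i ∧ zr.card ≤ m - k

/-- The optimal value OPT(f, (S_i), k) over feasible profiles with n agents. -/
noncomputable def OPTval [DecidableEq α] [Fintype α] (f : Finset α → ℝ) (Ss : ℕ → Finset α)
    (n k : ℕ) : ℝ :=
  ((Finset.univ : Finset (Fin n → Finset α)).filter
      (fun y => ∀ i : Fin n, y i ⊆ Ss (i : ℕ) ∧ (y i).card ≤ k)).sup'
    ⟨(fun _ => ∅), by simp⟩ (fun y => f (Finset.univ.biUnion (fun i => y i)))

section Aux

variable [DecidableEq α] {f : Finset α → ℝ}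

lemma single_anti (hmono : IsMonotoneFn f) (hsub : IsSubmodularFn f)
    {X Y : Finset α} (h : X ⊆ Y) (s : α) :
    f (insert s Y) - f Y ≤ f (insert s X) - f X := by
  by_cases hs : s ∈ Y
  · rw [Finset.insert_eq_self.2 hs]
    have h1 : f X ≤ f (insert s X) := hmono _ _ (subset_insert _ _)
    linarith
  · exact hsub X Y h s hs

lemma marg_anti (hmono : IsMonotoneFn f) (hsub : IsSubmodularFn f)
    (A : Finset α) {B C : Finset α} (h : B ⊆ C) :
    f (A ∪ C) - f C ≤ f (A ∪ B) - f B := by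
  induction A using Finset.induction_on with
  | empty => simp
  | @insert a A' ha ih =>
    rw [insert_union, insert_union]
    have h1 := single_anti hmono hsub (union_subset_union (Subset.refl A') h) a
    linarith

lemma marg_nonneg (hmono : IsMonotoneFn f) (A B : Finset α) :
    0 ≤ f (A ∪ B) - f B := by
  have := hmono B (A ∪ B) subset_union_right
  linarith

lemma pref_zero (y : ℕ → Finset α) : pref y 0 = ∅ := by simp [pref]

lemma pref_succ (y : ℕ → Finset α) (i : ℕ) : pref y (i + 1) = y i ∪ pref y i := by
  rw [pref, pref, range_add_one, biUnion_insert]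

lemma pref_mono (y : ℕ → Finset α) {i j : ℕ} (h : i ≤ j) : pref y i ⊆ pref y j :=
  biUnion_subset_biUnion_of_subset_left _ (range_subset_range.2 h)

lemma chain_bound (hmono : IsMonotoneFn f) (hsub : IsSubmodularFn f)
    (y : ℕ → Finset α) (B : Finset α) (j : ℕ) :
    f (pref y j ∪ B) ≤ f B + ∑ i ∈ range j, (f (y i ∪ B) - f B) := by
  induction j with
  | zero => simp [pref_zero]
  | succ j ih =>
    have h1 : f (pref y (j + 1) ∪ B) = f (y j ∪ (pref y j ∪ B)) := by
      rw [pref_succ, union_assoc]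
    have h2 := marg_anti hmono hsub (y j) (subset_union_right : B ⊆ pref y j ∪ B)
    rw [sum_range_succ]
    linarith

lemma sum_erase_marg (hmono : IsMonotoneFn f) (hsub : IsSubmodularFn f)
    (B : Finset α) (w : Finset α) :
    ∑ x ∈ w, (f (w ∪ B) - f (w.erase x ∪ B)) ≤ f (w ∪ B) - f B := by
  induction w using Finset.induction_on with
  | empty => simp
  | @insert y w' hy ih =>
    rw [sum_insert hy, erase_insert hy]
    have key : ∀ x ∈ w', f (insert y w' ∪ B) - f ((insert y w').erase x ∪ B)
        ≤ f (w' ∪ B) - f (w'.erase x ∪ B) := by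
      intro x hx
      have hxy : x ≠ y := by rintro rfl; exact hy hx
      rw [erase_insert_of_ne hxy.symm, insert_union, insert_union]
      have hWrite : w' ∪ B = insert x (w'.erase x ∪ B) := by
        rw [← insert_union, insert_erase hx]
      have h1 := single_anti hmono hsub
        (subset_insert y (w'.erase x ∪ B)) x
      have hcomm : insert x (insert y (w'.erase x ∪ B)) = insert y (w' ∪ B) := by
        rw [Finset.insert_comm, ← hWrite]
      rw [hcomm, ← hWrite] at h1
      linarith
    have hsumle := Finset.sum_le_sum key
    have := ih
    linarith

lemma exists_subset_marg (hmono : IsMonotoneFn f) (hsub : IsSubmodularFn f)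
    (A B : Finset α) (j : ℕ) (hj : j ≤ A.card) :
    ∃ w, w ⊆ A ∧ w.card = j ∧
      (j : ℝ) * (f (A ∪ B) - f B) ≤ (A.card : ℝ) * (f (w ∪ B) - f B) := by
  obtain ⟨d, hd⟩ : ∃ d, A.card = j + d := ⟨A.card - j, by omega⟩
  clear hj
  induction d generalizing j with
  | zero =>
    refine ⟨A, Subset.refl _, by omega, ?_⟩
    have : A.card = j := by omega
    rw [this]
  | succ d ih =>
    obtain ⟨w', hw'A, hw'card, hw'⟩ := ih (j + 1) (by omega)
    have hw'ne : w'.Nonempty := card_pos.1 (by omega)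
    have hcpos : (0 : ℝ) < (w'.card : ℝ) := by
      exact_mod_cast card_pos.2 hw'ne
    have hsum : ∑ x ∈ w', (f (w' ∪ B) - f (w'.erase x ∪ B))
        ≤ ∑ _x ∈ w', (f (w' ∪ B) - f B) / (w'.card : ℝ) := by
      rw [sum_const, nsmul_eq_mul, mul_div_cancel₀ _ (ne_of_gt hcpos)]
      exact sum_erase_marg hmono hsub B w'
    obtain ⟨x, hxw, hxle⟩ := Finset.exists_le_of_sum_le hw'ne hsum
    refine ⟨w'.erase x, (erase_subset _ _).trans hw'A, ?_, ?_⟩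
    · rw [card_erase_of_mem hxw, hw'card]; omega
    · -- from hxle : marg w' - marg (erase) ≤ marg w' / card
      have hcard : (w'.card : ℝ) = (j : ℝ) + 1 := by
        rw [hw'card]; push_cast; ring
      have hE : (j : ℝ) * (f (w' ∪ B) - f B)
          ≤ ((j : ℝ) + 1) * (f (w'.erase x ∪ B) - f B) := by
        rw [le_div_iff₀ hcpos] at hxle
        rw [hcard] at hxle
        nlinarith [hxle]
      have hA0 : (0 : ℝ) ≤ (A.card : ℝ) := by positivity
      have hj0 : (0 : ℝ) ≤ (j : ℝ) := by positivity
      have e1 : (j : ℝ) * (((j : ℝ) + 1) * (f (A ∪ B) - f B))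
          ≤ (j : ℝ) * ((A.card : ℝ) * (f (w' ∪ B) - f B)) := by
        push_cast at hw' ⊢
        exact mul_le_mul_of_nonneg_left hw' hj0
      have e2 : (A.card : ℝ) * ((j : ℝ) * (f (w' ∪ B) - f B))
          ≤ (A.card : ℝ) * (((j : ℝ) + 1) * (f (w'.erase x ∪ B) - f B)) :=
        mul_le_mul_of_nonneg_left hE hA0
      have hfinal : ((j : ℝ) + 1) * ((j : ℝ) * (f (A ∪ B) - f B))
          ≤ ((j : ℝ) + 1) * ((A.card : ℝ) * (f (w'.erase x ∪ B) - f B)) := by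
        nlinarith [e1, e2]
      have hpos : (0 : ℝ) < (j : ℝ) + 1 := by positivity
      exact le_of_mul_le_mul_left hfinal hpos

lemma geom_split (β : ℝ) (a b : ℕ) :
    ∑ t ∈ range (a + b), β ^ t
      = ∑ t ∈ range a, β ^ t + β ^ a * ∑ t ∈ range b, β ^ t := by
  induction b with
  | zero => simp
  | succ b ih =>
    have h : a + (b + 1) = (a + b) + 1 := by omega
    rw [h, sum_range_succ, ih, sum_range_succ, pow_add]
    ring

lemma num_lemma (β : ℝ) (hβ0 : 0 ≤ β) (n : ℕ) (hn : 2 ≤ n) (a c : ℕ → ℝ)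
    (hc0 : ∀ i, i < n - 1 → 0 ≤ c i) (hca : ∀ i, i < n - 1 → c i ≤ a i)
    (hcb : ∀ i, i < n - 1 → β * c i ≤ a (i + 1)) :
    (∑ t ∈ range n, β ^ t) * ∑ i ∈ range (n - 1), c i
      ≤ (∑ t ∈ range (n - 1), β ^ t) * ∑ i ∈ range n, a i := by
  obtain ⟨p, rfl⟩ : ∃ p, n = p + 1 := ⟨n - 1, by omega⟩
  simp only [Nat.add_sub_cancel] at hc0 hca hcb ⊢
  set σ : ℕ → ℝ := fun j => ∑ t ∈ range j, β ^ t with hσ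
  have hσ0 : ∀ j, 0 ≤ σ j := fun j => Finset.sum_nonneg (fun t _ => pow_nonneg hβ0 t)
  have hσsplit : ∀ u v : ℕ, σ (u + v) = σ u + β ^ u * σ v := fun u v => geom_split β u v
  have step1 : ∀ i, i < p →
      σ (p + 1) * c i ≤ σ (p - i) * a i + β ^ (p - 1 - i) * σ (i + 1) * a (i + 1) := by
    intro i hi
    have hsplit : σ (p + 1) = σ (p - i) + β ^ (p - i) * σ (i + 1) := by
      have h : p + 1 = (p - i) + (i + 1) := by omega
      rw [h, hσsplit]
    have hpow : β ^ (p - i) = β ^ (p - 1 - i) * β := by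
      rw [← pow_succ]; congr 1; omega
    have t1 : σ (p - i) * c i ≤ σ (p - i) * a i :=
      mul_le_mul_of_nonneg_left (hca i hi) (hσ0 _)
    have ht2c : (0 : ℝ) ≤ β ^ (p - 1 - i) * σ (i + 1) := by
      have := hσ0 (i + 1); positivity
    have t2 : β ^ (p - 1 - i) * σ (i + 1) * (β * c i)
        ≤ β ^ (p - 1 - i) * σ (i + 1) * a (i + 1) :=
      mul_le_mul_of_nonneg_left (hcb i hi) ht2c
    calc σ (p + 1) * c i
        = σ (p - i) * c i + β ^ (p - 1 - i) * σ (i + 1) * (β * c i) := by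
          rw [hsplit, hpow]; ring
      _ ≤ σ (p - i) * a i + β ^ (p - 1 - i) * σ (i + 1) * a (i + 1) := by linarith
  calc σ (p + 1) * ∑ i ∈ range p, c i
      = ∑ i ∈ range p, σ (p + 1) * c i := by rw [mul_sum]
    _ ≤ ∑ i ∈ range p,
          (σ (p - i) * a i + β ^ (p - 1 - i) * σ (i + 1) * a (i + 1)) :=
        Finset.sum_le_sum (fun i hi => step1 i (mem_range.1 hi))
    _ = ∑ i ∈ range p, σ (p - i) * a i
          + ∑ i ∈ range p, β ^ (p - 1 - i) * σ (i + 1) * a (i + 1) := by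
        rw [sum_add_distrib]
    _ = ∑ i ∈ range (p + 1), σ (p - i) * a i
          + ∑ i ∈ range (p + 1), β ^ (p - i) * σ i * a i := by
        congr 1
        · rw [sum_range_succ]
          have h0 : σ (p - p) = 0 := by
            have : p - p = 0 := by omega
            rw [this]; simp [hσ]
          rw [h0]; ring
        · rw [sum_range_succ']
          have h0 : β ^ (p - 0) * σ 0 * a 0 = 0 := by simp [hσ]
          rw [h0, add_zero]
          apply sum_congr rfl
          intro i hi
          have : p - (i + 1) = p - 1 - i := by omega
          rw [this]
    _ = ∑ i ∈ range (p + 1), σ p * a i := by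
        rw [← sum_add_distrib]
        apply sum_congr rfl
        intro i hi
        have h : p = (p - i) + i := by
          have := mem_range.1 hi; omega
        have hid : σ p = σ (p - i) + β ^ (p - i) * σ i := by
          conv_lhs => rw [h]
          exact hσsplit _ _
        calc σ (p - i) * a i + β ^ (p - i) * σ i * a i
            = (σ (p - i) + β ^ (p - i) * σ i) * a i := by ring
          _ = σ p * a i := by rw [← hid]
    _ = σ p * ∑ i ∈ range (p + 1), a i := by rw [mul_sum]


lemma ag_greedy_bound {f : Finset α → ℝ} {Ss : ℕ → Finset α} {k m n : ℕ}
    {xag zag : ℕ → Finset α}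
    (hag : AugGreedy f Ss k m n xag zag) {i : ℕ} (hi : i < n)
    {c : Finset α} (hc : c ⊆ Ss i ∪ pref zag i) (hcard : c.card ≤ k) :
    f (c ∪ pref xag i) ≤ f (pref xag (i + 1)) := by
  obtain ⟨⟨-, -, hmax⟩, -⟩ := hag i hi
  rw [pref_succ]
  exact hmax c hc hcard

lemma z_bound (hmono : IsMonotoneFn f) (hsub : IsSubmodularFn f)
    {Ss : ℕ → Finset α} {k m n : ℕ} (hk : 1 ≤ k)
    {xng xag zag : ℕ → Finset α}
    (hng : NomGreedy f Ss k n xng) (hag : AugGreedy f Ss k m n xag zag)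
    {i : ℕ} (hi : i + 1 < n) :
    min ((m : ℝ) / k) 1 * (f (xng i ∪ pref xag (i + 1)) - f (pref xag (i + 1)))
      ≤ f (pref xag (i + 2)) - f (pref xag (i + 1)) := by
  obtain ⟨-, zk, zr, hzeq, hzkS, hzkcard, hzopt, -, -⟩ := hag i (by omega)
  obtain ⟨hxS, hxcard, -⟩ := hng i (by omega)
  set B := pref xag (i + 1) with hB
  set A := xng i with hA
  obtain ⟨w, hwA, hwcard, hwmarg⟩ :=
    exists_subset_marg hmono hsub A B (min (min k m) A.card) (min_le_right _ _)
  have hwS : w ⊆ Ss i := hwA.trans hxS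
  have hwk : w.card ≤ min k m := hwcard.le.trans (min_le_left _ _)
  have hzw := hzopt w hwS hwk
  simp only [marg] at hzw
  have hzk_le : f (zk ∪ B) - f B ≤ f (pref xag (i + 2)) - f B := by
    have hsub1 : zk ⊆ pref zag (i + 1) := by
      have h1 : zk ⊆ zag i := hzeq ▸ subset_union_left
      exact h1.trans (subset_biUnion_of_mem zag (self_mem_range_succ i))
    have h2 := ag_greedy_bound hag (show i + 1 < n from hi)
      (c := zk) (hsub1.trans subset_union_right) (hzkcard.trans (min_le_left _ _))
    have hBe : pref xag (i + 1 + 1) = pref xag (i + 2) := by norm_num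
    rw [hBe] at h2
    linarith [h2]
  have hk0 : (0 : ℝ) < (k : ℝ) := by exact_mod_cast hk
  set β := min ((m : ℝ) / k) 1 with hβ
  have hβ0 : 0 ≤ β := le_min (by positivity) zero_le_one
  have hβ1 : β ≤ 1 := min_le_right _ _
  have hAnn : 0 ≤ f (A ∪ B) - f B := marg_nonneg hmono A B
  have hznn : 0 ≤ f (zk ∪ B) - f B := marg_nonneg hmono zk B
  have hjA : β * (A.card : ℝ) ≤ ((min (min k m) A.card : ℕ) : ℝ) := by
    rcases le_or_gt m k with hmk | hmk
    · have hβeq : β = (m : ℝ) / k := by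
        rw [hβ, min_eq_left]
        rw [div_le_one hk0]
        exact_mod_cast hmk
      rcases le_or_gt A.card m with hAm | hAm
      · have h1 : min (min k m) A.card = A.card :=
          min_eq_right (Nat.le_min.2 ⟨hxcard, hAm⟩)
        rw [h1]
        have hcn : (0 : ℝ) ≤ (A.card : ℝ) := by positivity
        nlinarith
      · have h1 : min (min k m) A.card = m := by
          rw [min_eq_right hmk, min_eq_left hAm.le]
        rw [h1, hβeq, div_mul_eq_mul_div, div_le_iff₀ hk0]
        have h2 : (A.card : ℝ) ≤ (k : ℝ) := by exact_mod_cast hxcard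
        have h3 : (0 : ℝ) ≤ (m : ℝ) := by positivity
        nlinarith
    · have hβeq : β = 1 := by
        rw [hβ, min_eq_right]
        rw [one_le_div hk0]
        exact_mod_cast hmk.le
      have h1 : min (min k m) A.card = A.card := by
        rw [min_eq_left hmk.le, min_eq_right hxcard]
      rw [hβeq, h1, one_mul]
  rcases Nat.eq_zero_or_pos A.card with hA0 | hApos
  · have hAe : A = ∅ := card_eq_zero.1 hA0
    rw [hAe, empty_union]
    simp only [sub_self, mul_zero]
    linarith
  · have hApos' : (0 : ℝ) < (A.card : ℝ) := by exact_mod_cast hApos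
    have h1 : β * (f (A ∪ B) - f B) * (A.card : ℝ)
        ≤ (f (w ∪ B) - f B) * (A.card : ℝ) := by
      calc β * (f (A ∪ B) - f B) * (A.card : ℝ)
          = (β * (A.card : ℝ)) * (f (A ∪ B) - f B) := by ring
        _ ≤ ((min (min k m) A.card : ℕ) : ℝ) * (f (A ∪ B) - f B) :=
            mul_le_mul_of_nonneg_right hjA hAnn
        _ ≤ (A.card : ℝ) * (f (w ∪ B) - f B) := hwmarg
        _ = (f (w ∪ B) - f B) * (A.card : ℝ) := by ring
    have h2 : β * (f (A ∪ B) - f B) ≤ f (w ∪ B) - f B :=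
      le_of_mul_le_mul_right h1 hApos'
    linarith

end Aux

/-- Theorem 2, lower bound: augmented greedy loses at most the worst-case factor
relative to nominal greedy. -/
theorem stmt4 [DecidableEq α] [Fintype α] (f : Finset α → ℝ)
    (hnorm : f ∅ = 0) (hmono : IsMonotoneFn f) (hsub : IsSubmodularFn f)
    (n k m : ℕ) (hn : 2 ≤ n) (hk : 1 ≤ k) (Ss : ℕ → Finset α)
    (xng : ℕ → Finset α) (hng : NomGreedy f Ss k n xng)
    (xag zag : ℕ → Finset α) (hag : AugGreedy f Ss k m n xag zag) :
    f (pref xag n) ≥ f (pref xng n) /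
      (2 - (min ((m : ℝ) / k) 1) ^ (n - 1) / ∑ i ∈ Finset.range n, (min ((m : ℝ) / k) 1) ^ i) := by
  obtain ⟨p, rfl⟩ : ∃ p, n = p + 1 := ⟨n - 1, by omega⟩
  have hp : 1 ≤ p := by omega
  simp only [Nat.add_sub_cancel]
  set β := min ((m : ℝ) / k) 1 with hβ
  have hk0 : (0 : ℝ) < (k : ℝ) := by exact_mod_cast hk
  have hβ0 : 0 ≤ β := le_min (by positivity) zero_le_one
  set a : ℕ → ℝ := fun i => f (pref xag (i + 1)) - f (pref xag i) with ha
  set c : ℕ → ℝ := fun i => f (xng i ∪ pref xag p) - f (pref xag p) with hc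
  have hc0 : ∀ i, 0 ≤ c i := fun i => marg_nonneg hmono _ _
  have hca : ∀ i, i < p + 1 → c i ≤ a i := by
    intro i hi
    have h1 : c i ≤ f (xng i ∪ pref xag i) - f (pref xag i) :=
      marg_anti hmono hsub (xng i) (pref_mono xag (by omega : i ≤ p))
    obtain ⟨hxS, hxcard, -⟩ := hng i hi
    have h2 := ag_greedy_bound hag hi (hxS.trans subset_union_left) hxcard
    have h3 : a i = f (pref xag (i + 1)) - f (pref xag i) := rfl
    rw [h3]
    linarith
  have hcb : ∀ i, i < p → β * c i ≤ a (i + 1) := by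
    intro i hi
    have h1 : c i ≤ f (xng i ∪ pref xag (i + 1)) - f (pref xag (i + 1)) :=
      marg_anti hmono hsub (xng i) (pref_mono xag (by omega : i + 1 ≤ p))
    have h2 := z_bound hmono hsub hk hng hag (show i + 1 < p + 1 by omega)
    have h3 : a (i + 1) = f (pref xag (i + 2)) - f (pref xag (i + 1)) := rfl
    rw [h3]
    have h4 : β * c i ≤ β * (f (xng i ∪ pref xag (i + 1)) - f (pref xag (i + 1))) :=
      mul_le_mul_of_nonneg_left h1 hβ0
    rw [← hβ] at h2
    linarith
  -- telescoping sum of a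
  have htel : ∑ i ∈ range (p + 1), a i = f (pref xag (p + 1)) := by
    rw [ha]
    rw [Finset.sum_range_sub (fun i => f (pref xag i))]
    rw [pref_zero, hnorm, sub_zero]
  -- chain bound
  have hchain : f (pref xng (p + 1))
      ≤ f (pref xag p) + ∑ i ∈ range (p + 1), c i := by
    have h1 : f (pref xng (p + 1)) ≤ f (pref xng (p + 1) ∪ pref xag p) :=
      hmono _ _ subset_union_left
    have h2 := chain_bound hmono hsub xng (pref xag p) (p + 1)
    calc f (pref xng (p + 1)) ≤ f (pref xng (p + 1) ∪ pref xag p) := h1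
      _ ≤ f (pref xag p) + ∑ i ∈ range (p + 1),
            (f (xng i ∪ pref xag p) - f (pref xag p)) := h2
      _ = f (pref xag p) + ∑ i ∈ range (p + 1), c i := rfl
  have hsplit : ∑ i ∈ range (p + 1), c i = ∑ i ∈ range p, c i + c p :=
    Finset.sum_range_succ c p
  have hcp : c p ≤ a p := hca p (by omega)
  have hap : a p = f (pref xag (p + 1)) - f (pref xag p) := rfl
  have hmain : f (pref xng (p + 1))
      ≤ f (pref xag (p + 1)) + ∑ i ∈ range p, c i := by
    rw [hsplit] at hchain
    rw [hap] at hcp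
    linarith
  -- numeric lemma
  set S := ∑ t ∈ range (p + 1), β ^ t with hS
  set Sp := ∑ t ∈ range p, β ^ t with hSp
  have hnum : S * ∑ i ∈ range p, c i ≤ Sp * ∑ i ∈ range (p + 1), a i :=
    num_lemma β hβ0 (p + 1) hn a c (fun i _ => hc0 i)
      (fun i hi => hca i (by omega)) (fun i hi => hcb i hi)
  rw [htel] at hnum
  have hSpos : 0 < S := by
    have h1 : β ^ 0 ≤ S :=
      Finset.single_le_sum (f := fun t => β ^ t)
        (fun t _ => pow_nonneg hβ0 t) (mem_range.2 (by omega))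
    rw [pow_zero] at h1
    linarith
  have hβpS : β ^ p ≤ S :=
    Finset.single_le_sum (f := fun t => β ^ t)
      (fun t _ => pow_nonneg hβ0 t) (mem_range.2 (by omega))
  have hfX : 0 ≤ f (pref xag (p + 1)) := by
    have := hmono ∅ (pref xag (p + 1)) (empty_subset _)
    rw [hnorm] at this
    exact this
  have hsumc : ∑ i ∈ range p, c i ≤ Sp * f (pref xag (p + 1)) / S := by
    rw [le_div_iff₀ hSpos]
    linarith
  have hD : 0 < 2 - β ^ p / S := by
    have h1 : β ^ p / S ≤ 1 := (div_le_one hSpos).2 hβpS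
    linarith
  rw [ge_iff_le, div_le_iff₀ hD]
  have hSpS : Sp = S - β ^ p := by
    rw [hS, Finset.sum_range_succ]
    ring
  have hexp : f (pref xag (p + 1)) * (2 - β ^ p / S)
      = f (pref xag (p + 1)) + Sp * f (pref xag (p + 1)) / S := by
    rw [hSpS]
    field_simp
    ring
  linarith
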